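/- arXiv:1810.06829 — 2 statements merged into one kernel-verified Lean document; each statement's English description precedes it below -/
import Mathlib

section
/- For every n ≥ 4 and every x ∈ [0,1], the second-order modified Durrmeyer operator satisfies: D̃_n^{M,2}(e_0; x) = 1, D̃_n^{M,2}(e_1; x) = x, and D̃_n^{M,2}(e_2; x) = x^2 + 20x(1−x)/((n+2)(n+3)) − 3/((n+2)(n+3)), where e_i(t) = t^i. -/
open Filter Topology

open Filter Topology

noncomputable def bern (n : ℕ) (k : ℤ) (x : ℝ) : ℝ :=
  if 0 ≤ k ∧ k ≤ (n : ℤ) then (n.choose k.toNat : ℝ) * x ^ k.toNat * (1 - x) ^ (n - k.toNat)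
  else 0

-- beta integral
lemma betaInt (b : ℕ) : ∀ a : ℕ, ∫ t in (0:ℝ)..1, t ^ a * (1 - t) ^ b
    = (a.factorial * b.factorial : ℝ) / (a + b + 1).factorial := by
  induction b with
  | zero =>
    intro a
    simp [integral_pow, Nat.factorial_succ]
    have h : ((a:ℝ)+1) ≠ 0 := by positivity
    field_simp
  | succ b ih =>
    intro a
    have hi : ∀ c d : ℕ, IntervalIntegrable (fun t : ℝ => t ^ c * (1 - t) ^ d)
        MeasureTheory.volume 0 1 := by
      intro c d
      exact ((by continuity : Continuous fun t:ℝ => t ^ c * (1 - t) ^ d)).intervalIntegrable 0 1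
    have h1 : ∫ t in (0:ℝ)..1, t ^ a * (1 - t) ^ (b + 1)
        = (∫ t in (0:ℝ)..1, t ^ a * (1 - t) ^ b)
          - ∫ t in (0:ℝ)..1, t ^ (a+1) * (1 - t) ^ b := by
      rw [← intervalIntegral.integral_sub (hi a b) (hi (a+1) b)]
      apply intervalIntegral.integral_congr
      intro t _
      ring
    rw [h1, ih a, ih (a+1)]
    have e1 : a + (b+1) + 1 = (a + b + 1) + 1 := by ring
    have e2 : (a+1) + b + 1 = (a + b + 1) + 1 := by ring
    rw [e1, e2, Nat.factorial_succ (a+b+1), Nat.factorial_succ a, Nat.factorial_succ b]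
    have h2 : ((a+b+1).factorial : ℝ) ≠ 0 := Nat.cast_ne_zero.2 (Nat.factorial_ne_zero _)
    have h3 : ((a+b+1 : ℕ) : ℝ) + 1 ≠ 0 := by positivity
    field_simp
    push_cast
    ring

lemma bern_integral (n k j : ℕ) (hk : k ≤ n) :
    ∫ t in (0:ℝ)..1, bern n (↑k) t * t ^ j
      = (n.choose k : ℝ) * ((k+j).factorial * (n-k).factorial) / (n + j + 1).factorial := by
  have h1 : ∫ t in (0:ℝ)..1, bern n (↑k) t * t ^ j
      = (n.choose k : ℝ) * ∫ t in (0:ℝ)..1, t ^ (k + j) * (1 - t) ^ (n - k) := by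
    rw [← intervalIntegral.integral_const_mul]
    apply intervalIntegral.integral_congr
    intro t _
    have hc : (0:ℤ) ≤ (k:ℤ) ∧ (k:ℤ) ≤ (n:ℤ) := ⟨Int.natCast_nonneg k, by exact_mod_cast hk⟩
    simp only [bern, if_pos hc, Int.toNat_natCast]
    ring
  rw [h1, betaInt]
  have e : k + j + (n - k) + 1 = n + j + 1 := by omega
  rw [e]
  ring

lemma fact_ne (m : ℕ) : ((m.factorial : ℝ)) ≠ 0 := Nat.cast_ne_zero.2 (Nat.factorial_ne_zero _)

lemma int0 (n k : ℕ) (hk : k ≤ n) :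
    ∫ t in (0:ℝ)..1, bern n (↑k) t * 1 = 1 / ((n:ℝ) + 1) := by
  have := bern_integral n k 0 hk
  simp only [pow_zero] at this
  rw [this, Nat.cast_choose ℝ hk]
  have h1 : ((n:ℝ)+1) ≠ 0 := by positivity
  have e : n + 0 + 1 = n + 1 := rfl
  rw [e, Nat.factorial_succ n, Nat.add_zero]
  field_simp [fact_ne]
  push_cast
  ring

lemma int1 (n k : ℕ) (hk : k ≤ n) :
    ∫ t in (0:ℝ)..1, bern n (↑k) t * t
      = ((k:ℝ) + 1) / (((n:ℝ) + 1) * ((n:ℝ) + 2)) := by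
  have := bern_integral n k 1 hk
  simp only [pow_one] at this
  rw [this, Nat.cast_choose ℝ hk]
  have e : n + 1 + 1 = (n+1) + 1 := rfl
  rw [e, Nat.factorial_succ (n+1), Nat.factorial_succ n, Nat.factorial_succ k]
  have h1 : ((n:ℝ)+1) ≠ 0 := by positivity
  have h2 : ((n:ℝ)+2) ≠ 0 := by positivity
  field_simp [fact_ne]
  try push_cast
  ring

lemma int2 (n k : ℕ) (hk : k ≤ n) :
    ∫ t in (0:ℝ)..1, bern n (↑k) t * t ^ 2
      = ((k:ℝ) + 1) * ((k:ℝ) + 2) / (((n:ℝ) + 1) * ((n:ℝ) + 2) * ((n:ℝ) + 3)) := by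
  have := bern_integral n k 2 hk
  rw [this, Nat.cast_choose ℝ hk]
  have e : n + 2 + 1 = ((n+1) + 1) + 1 := rfl
  have e2 : k + 2 = (k + 1) + 1 := rfl
  rw [e, e2, Nat.factorial_succ ((n+1)+1), Nat.factorial_succ (n+1), Nat.factorial_succ n,
    Nat.factorial_succ (k+1), Nat.factorial_succ k]
  have h1 : ((n:ℝ)+1) ≠ 0 := by positivity
  have h2 : ((n:ℝ)+2) ≠ 0 := by positivity
  have h3 : ((n:ℝ)+3) ≠ 0 := by positivity
  field_simp [fact_ne]
  try push_cast
  ring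

lemma bern_eq_eval (m i : ℕ) (hi : i ≤ m) (x : ℝ) :
    bern m (↑i) x = (bernsteinPolynomial ℝ m i).eval x := by
  have hc : (0:ℤ) ≤ (i:ℤ) ∧ (i:ℤ) ≤ (m:ℤ) := ⟨Int.natCast_nonneg i, by exact_mod_cast hi⟩
  simp only [bern, if_pos hc, Int.toNat_natCast, bernsteinPolynomial]
  simp

lemma castlem : ∀ j : ℕ, ((j * (j-1) : ℕ) : ℝ) = (j:ℝ) * ((j:ℝ) - 1) := by
  rintro (_ | j)
  · simp
  · push_cast [Nat.succ_sub_one]; ring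

lemma T0 (m : ℕ) (x : ℝ) : ∑ i ∈ Finset.range (m+1), bern m (↑i) x = 1 := by
  have h := congrArg (Polynomial.eval x) (bernsteinPolynomial.sum (R := ℝ) m)
  simp only [Polynomial.eval_finset_sum, Polynomial.eval_one] at h
  rw [Finset.sum_congr rfl fun i hi =>
    bern_eq_eval m i (Nat.lt_succ_iff.mp (Finset.mem_range.mp hi)) x]
  exact h

lemma T1 (m : ℕ) (x : ℝ) :
    ∑ i ∈ Finset.range (m+1), (i:ℝ) * bern m (↑i) x = (m:ℝ) * x := by
  have h := congrArg (Polynomial.eval x) (bernsteinPolynomial.sum_smul (R := ℝ) m)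
  simp only [Polynomial.eval_finset_sum, Polynomial.eval_smul, smul_eq_mul, nsmul_eq_mul,
    Polynomial.eval_mul, Polynomial.eval_natCast, Polynomial.eval_X] at h
  rw [Finset.sum_congr rfl fun i hi => by
    rw [bern_eq_eval m i (Nat.lt_succ_iff.mp (Finset.mem_range.mp hi)) x]]
  exact h

lemma T2 (m : ℕ) (x : ℝ) :
    ∑ i ∈ Finset.range (m+1), (i:ℝ) * ((i:ℝ) - 1) * bern m (↑i) x
      = (m:ℝ) * ((m:ℝ) - 1) * x ^ 2 := by
  have h := congrArg (Polynomial.eval x) (bernsteinPolynomial.sum_mul_smul (R := ℝ) m)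
  simp only [Polynomial.eval_finset_sum, Polynomial.eval_smul, smul_eq_mul, nsmul_eq_mul,
    Polynomial.eval_mul, Polynomial.eval_natCast, Polynomial.eval_X, Polynomial.eval_pow] at h
  rw [Finset.sum_congr rfl fun i hi => by
    rw [bern_eq_eval m i (Nat.lt_succ_iff.mp (Finset.mem_range.mp hi)) x, ← castlem i]]
  rw [h, castlem]

lemma sum_quad (m : ℕ) (x : ℝ) (a b c : ℝ) :
    ∑ i ∈ Finset.range (m+1), (a * (i:ℝ)^2 + b * (i:ℝ) + c) * bern m (↑i) x
      = a * ((m:ℝ) * ((m:ℝ) - 1) * x^2 + (m:ℝ) * x) + b * ((m:ℝ) * x) + c := by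
  have he : ∀ i ∈ Finset.range (m+1),
      (a * (i:ℝ)^2 + b * (i:ℝ) + c) * bern m (↑i) x
        = a * ((i:ℝ) * ((i:ℝ) - 1) * bern m (↑i) x)
          + ((a + b) * ((i:ℝ) * bern m (↑i) x) + c * bern m (↑i) x) := by
    intro i _; ring
  rw [Finset.sum_congr rfl he, Finset.sum_add_distrib, Finset.sum_add_distrib,
    ← Finset.mul_sum, ← Finset.mul_sum, ← Finset.mul_sum, T0, T1, T2]
  ring

lemma bern_zero (m : ℕ) (k : ℤ) (x : ℝ) (hk : k < 0 ∨ (m:ℤ) < k) : bern m k x = 0 := by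
  rw [bern, if_neg]
  rintro ⟨h1, h2⟩
  omega

lemma shift (m j : ℕ) (hj : j ≤ 2) (g : ℕ → ℝ) (x : ℝ) :
    ∑ k ∈ Finset.range (m+3), bern m ((k:ℤ) - (j:ℤ)) x * g k
      = ∑ i ∈ Finset.range (m+1), bern m (↑i) x * g (i+j) := by
  have h1 : ∑ k ∈ Finset.range (m+3), bern m ((k:ℤ) - (j:ℤ)) x * g k
      = ∑ k ∈ Finset.range (j+(m+1)), bern m ((k:ℤ) - (j:ℤ)) x * g k := by
    symm
    apply Finset.sum_subset
    · intro k hk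
      simp only [Finset.mem_range] at *
      omega
    · intro k _ hk
      simp only [Finset.mem_range, not_lt] at hk
      rw [bern_zero m _ x (Or.inr (by omega))]
      ring
  rw [h1, Finset.sum_range_add]
  have h2 : ∑ k ∈ Finset.range j, bern m ((k:ℤ) - (j:ℤ)) x * g k = 0 := by
    apply Finset.sum_eq_zero
    intro k hk
    simp only [Finset.mem_range] at hk
    rw [bern_zero m _ x (Or.inl (by omega))]
    ring
  rw [h2, zero_add]
  apply Finset.sum_congr rfl
  intro i _
  have : ((j:ℤ) + (i:ℤ)) - (j:ℤ) = (i:ℤ) := by ring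
  rw [show (↑(j+i) : ℤ) - (j:ℤ) = (i:ℤ) by push_cast; ring, Nat.add_comm j i]

lemma shift0 (m : ℕ) (g : ℕ → ℝ) (x : ℝ) :
    ∑ k ∈ Finset.range (m+3), bern m (↑k) x * g k
      = ∑ i ∈ Finset.range (m+1), bern m (↑i) x * g i := by
  have h := shift m 0 (by norm_num) g x
  simpa using h

lemma shift1 (m : ℕ) (g : ℕ → ℝ) (x : ℝ) :
    ∑ k ∈ Finset.range (m+3), bern m ((k:ℤ) - 1) x * g k
      = ∑ i ∈ Finset.range (m+1), bern m (↑i) x * g (i+1) := by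
  have h := shift m 1 (by norm_num) g x
  simpa using h

lemma shift2 (m : ℕ) (g : ℕ → ℝ) (x : ℝ) :
    ∑ k ∈ Finset.range (m+3), bern m ((k:ℤ) - 2) x * g k
      = ∑ i ∈ Finset.range (m+1), bern m (↑i) x * g (i+2) := by
  have h := shift m 2 (by norm_num) g x
  simpa using h

/-- Second-order modified Bernstein basis `p̃_{n,k}^{M,2}(x)`. -/
noncomputable def pM2 (n : ℕ) (k : ℤ) (x : ℝ) : ℝ :=
  (((n : ℝ) - 2) * x ^ 2 - (n : ℝ) * x + 3 / 2) * bern (n - 2) k x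
    + 2 * ((n : ℝ) - 2) * x * (1 - x) * bern (n - 2) (k - 1) x
    + (((n : ℝ) - 2) * x ^ 2 - ((n : ℝ) - 4) * x - 1 / 2) * bern (n - 2) (k - 2) x

lemma sum_pM2 (m : ℕ) (x : ℝ) (g : ℕ → ℝ) :
    ∑ k ∈ Finset.range (m+3), pM2 (m+2) (↑k) x * g k
      = ((m:ℝ) * x^2 - ((m:ℝ)+2) * x + 3/2)
          * (∑ i ∈ Finset.range (m+1), bern m (↑i) x * g i)
        + 2 * (m:ℝ) * x * (1-x)
          * (∑ i ∈ Finset.range (m+1), bern m (↑i) x * g (i+1))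
        + ((m:ℝ) * x^2 - ((m:ℝ)-2) * x - 1/2)
          * (∑ i ∈ Finset.range (m+1), bern m (↑i) x * g (i+2)) := by
  have e : m + 2 - 2 = m := rfl
  have he : ∀ k ∈ Finset.range (m+3),
      pM2 (m+2) (↑k) x * g k
        = ((m:ℝ) * x^2 - ((m:ℝ)+2) * x + 3/2) * (bern m (↑k) x * g k)
          + 2 * (m:ℝ) * x * (1-x) * (bern m ((k:ℤ) - 1) x * g k)
          + ((m:ℝ) * x^2 - ((m:ℝ)-2) * x - 1/2) * (bern m ((k:ℤ) - 2) x * g k) := by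
    intro k _
    simp only [pM2, e]
    push_cast
    ring
  rw [Finset.sum_congr rfl he, Finset.sum_add_distrib, Finset.sum_add_distrib,
    ← Finset.mul_sum, ← Finset.mul_sum, ← Finset.mul_sum, shift0, shift1, shift2]

lemma innerSumQ (m j : ℕ) (x : ℝ) (q : ℕ → ℝ) (a b c : ℝ)
    (hq : ∀ i : ℕ, q (i + j) = a * (i:ℝ)^2 + b * (i:ℝ) + c) :
    ∑ i ∈ Finset.range (m+1), bern m (↑i) x * q (i+j)
      = a * ((m:ℝ) * ((m:ℝ) - 1) * x^2 + (m:ℝ) * x) + b * ((m:ℝ) * x) + c := by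
  rw [Finset.sum_congr rfl fun i _ => by rw [hq i, mul_comm], sum_quad]

lemma innerSumQ0 (m : ℕ) (x : ℝ) (q : ℕ → ℝ) (a b c : ℝ)
    (hq : ∀ i : ℕ, q i = a * (i:ℝ)^2 + b * (i:ℝ) + c) :
    ∑ i ∈ Finset.range (m+1), bern m (↑i) x * q i
      = a * ((m:ℝ) * ((m:ℝ) - 1) * x^2 + (m:ℝ) * x) + b * ((m:ℝ) * x) + c := by
  have h := innerSumQ m 0 x q a b c (fun i => by rw [Nat.add_zero]; exact hq i)
  simpa using h

lemma innerJ (m j : ℕ) (x : ℝ) (a b c : ℝ) :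
    ∑ i ∈ Finset.range (m+1), bern m (↑i) x * (a * ((i+j:ℕ):ℝ)^2 + b * ((i+j:ℕ):ℝ) + c)
      = a * ((m:ℝ) * ((m:ℝ) - 1) * x^2 + (m:ℝ) * x)
        + (2*(j:ℝ)*a + b) * ((m:ℝ) * x) + (a*(j:ℝ)^2 + b*(j:ℝ) + c) :=
  innerSumQ m j x (fun k => a*(k:ℝ)^2 + b*(k:ℝ) + c) a (2*(j:ℝ)*a+b)
    (a*(j:ℝ)^2+b*(j:ℝ)+c) (fun i => by push_cast; ring)

/-- Second-order modified Durrmeyer operator `D̃_n^{M,2}(f;x)`. -/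
noncomputable def DM2 (n : ℕ) (f : ℝ → ℝ) (x : ℝ) : ℝ :=
  ((n : ℝ) + 1) * ∑ k ∈ Finset.range (n + 1),
    pM2 n k x * ∫ t in (0:ℝ)..1, bern n k t * f t

theorem DM2_moments (n : ℕ) (hn : 4 ≤ n) (x : ℝ) (hx : x ∈ Set.Icc (0:ℝ) 1) :
    DM2 n (fun _ => 1) x = 1 ∧
    DM2 n (fun t => t) x = x ∧
    DM2 n (fun t => t ^ 2) x
      = x ^ 2 + 20 * x * (1 - x) / (((n : ℝ) + 2) * ((n : ℝ) + 3))
        - 3 / (((n : ℝ) + 2) * ((n : ℝ) + 3)) := by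
  obtain ⟨m, rfl⟩ : ∃ m, n = m + 2 := ⟨n - 2, by omega⟩
  have hm3 : ((m:ℝ) + 3) ≠ 0 := by positivity
  have hm4 : ((m:ℝ) + 4) ≠ 0 := by positivity
  have hm5 : ((m:ℝ) + 5) ≠ 0 := by positivity
  refine ⟨?_, ?_, ?_⟩
  · -- moment 0
    simp only [DM2]
    rw [show m+2+1 = m+3 from rfl]
    have hint : ∀ k ∈ Finset.range (m+3),
        pM2 (m+2) (↑k) x * ∫ t in (0:ℝ)..1, bern (m+2) (↑k) t * 1
          = pM2 (m+2) (↑k) x * (0 * (k:ℝ)^2 + 0 * (k:ℝ) + 1/((m:ℝ)+3)) := by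
      intro k hk
      rw [int0 (m+2) k (by have := Finset.mem_range.mp hk; omega)]
      push_cast; ring
    rw [Finset.sum_congr rfl hint]
    have hS := sum_pM2 m x (fun k => 0 * (k:ℝ)^2 + 0 * (k:ℝ) + 1/((m:ℝ)+3))
    rw [innerSumQ0 m x _ 0 0 (1/((m:ℝ)+3)) (fun i => by push_cast; ring),
        innerJ m 1 x 0 0 (1/((m:ℝ)+3)), innerJ m 2 x 0 0 (1/((m:ℝ)+3))] at hS
    beta_reduce at hS
    rw [hS]
    push_cast
    field_simp
    ring
  · -- moment 1
    simp only [DM2]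
    rw [show m+2+1 = m+3 from rfl]
    have hint : ∀ k ∈ Finset.range (m+3),
        pM2 (m+2) (↑k) x * ∫ t in (0:ℝ)..1, bern (m+2) (↑k) t * t
          = pM2 (m+2) (↑k) x
            * (0 * (k:ℝ)^2 + (1/(((m:ℝ)+3)*((m:ℝ)+4))) * (k:ℝ)
                + 1/(((m:ℝ)+3)*((m:ℝ)+4))) := by
      intro k hk
      rw [int1 (m+2) k (by have := Finset.mem_range.mp hk; omega)]
      congr 1
      push_cast
      field_simp
      try ring
      try simp
    rw [Finset.sum_congr rfl hint]
    set d : ℝ := 1/(((m:ℝ)+3)*((m:ℝ)+4)) with hd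
    have hS := sum_pM2 m x (fun k => 0 * (k:ℝ)^2 + d * (k:ℝ) + d)
    rw [innerSumQ0 m x _ 0 d d (fun i => by push_cast; ring),
        innerJ m 1 x 0 d d, innerJ m 2 x 0 d d] at hS
    beta_reduce at hS
    rw [hS, hd]
    push_cast
    field_simp
    ring
  · -- moment 2
    simp only [DM2]
    rw [show m+2+1 = m+3 from rfl]
    set d : ℝ := 1/(((m:ℝ)+3)*((m:ℝ)+4)*((m:ℝ)+5)) with hd
    have hint : ∀ k ∈ Finset.range (m+3),
        pM2 (m+2) (↑k) x * ∫ t in (0:ℝ)..1, bern (m+2) (↑k) t * t ^ 2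
          = pM2 (m+2) (↑k) x * (d * (k:ℝ)^2 + (3*d) * (k:ℝ) + 2*d) := by
      intro k hk
      rw [int2 (m+2) k (by have := Finset.mem_range.mp hk; omega), hd]
      congr 1
      push_cast
      field_simp
      try ring
      try simp
    rw [Finset.sum_congr rfl hint]
    have hS := sum_pM2 m x (fun k => d * (k:ℝ)^2 + (3*d) * (k:ℝ) + 2*d)
    rw [innerSumQ0 m x _ d (3*d) (2*d) (fun i => by push_cast; ring),
        innerJ m 1 x d (3*d) (2*d), innerJ m 2 x d (3*d) (2*d)] at hS
    beta_reduce at hS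
    rw [hS, hd]
    push_cast
    field_simp
    ring
end

section
/- There exists a constant C > 0 such that for all n ≥ 4 and all x ∈ [0,1], the fourth central moment of the second-order modified Durrmeyer operator satisfies |D̃_n^{M,2}((t − x)^4; x) + 12x^2(1−x)^2 n^2/((n+2)(n+3)(n+4)(n+5))| ≤ C/n^3. -/
open Filter Topology

open Finset intervalIntegral

lemma dfc (m k : ℕ) : (m.descFactorial k : ℝ) = ∏ i ∈ Finset.range k, ((m:ℝ) - i) := by
  rw [Nat.descFactorial_eq_prod_range, Finset.prod_range_natCast_sub]

lemma df1 (m : ℕ) : (m.descFactorial 1 : ℝ) = (m:ℝ) := by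
  rw [dfc]; simp

lemma df2 (m : ℕ) : (m.descFactorial 2 : ℝ) = (m:ℝ) * ((m:ℝ)-1) := by
  rw [dfc, Finset.prod_range_succ, Finset.prod_range_succ]; simp

lemma df3 (m : ℕ) : (m.descFactorial 3 : ℝ) = (m:ℝ) * ((m:ℝ)-1) * ((m:ℝ)-2) := by
  rw [dfc, Finset.prod_range_succ, Finset.prod_range_succ, Finset.prod_range_succ]
  norm_num

lemma df4 (m : ℕ) : (m.descFactorial 4 : ℝ) = (m:ℝ) * ((m:ℝ)-1) * ((m:ℝ)-2) * ((m:ℝ)-3) := by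
  rw [dfc]
  rw [Finset.prod_range_succ, Finset.prod_range_succ, Finset.prod_range_succ,
    Finset.prod_range_succ]
  norm_num

lemma beta_nat (b a : ℕ) :
    ∫ t in (0:ℝ)..1, t ^ a * (1 - t) ^ b
      = (a.factorial : ℝ) * b.factorial / (a + b + 1).factorial := by
  induction b generalizing a with
  | zero =>
    simp only [pow_zero, mul_one, integral_pow, Nat.factorial_zero, Nat.cast_one,
      Nat.add_zero]
    rw [Nat.factorial_succ]
    push_cast
    rw [one_pow, zero_pow (by omega), sub_zero]
    rw [eq_comm, div_eq_div_iff (by positivity) (by positivity)]; ring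
  | succ b ih =>
    have hder : ∀ t ∈ Set.uIcc (0:ℝ) 1,
        HasDerivAt (fun t : ℝ => t^(a+1) * (1-t)^(b+1))
          (((a:ℝ)+1) * (t^a * (1-t)^(b+1)) - ((b:ℝ)+1) * (t^(a+1) * (1-t)^b)) t := by
      intro t _
      have h1 : HasDerivAt (fun t : ℝ => t^(a+1)) (((a:ℝ)+1) * t^a) t := by
        simpa using hasDerivAt_pow (a+1) t
      have h3 : HasDerivAt (fun y : ℝ => y^(b+1)) (((b:ℝ)+1) * (1-t)^b) (1-t) := by
        simpa using hasDerivAt_pow (b+1) (1-t)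
      have h4 : HasDerivAt (fun t : ℝ => 1 - t) (-1) t := by
        simpa using (hasDerivAt_id t).const_sub 1
      have h2 : HasDerivAt (fun t : ℝ => (1-t)^(b+1)) (-(((b:ℝ)+1) * (1-t)^b)) t := by
        have h5 := h3.comp t h4
        simp only [mul_neg, mul_one] at h5
        exact h5
      have := h1.mul h2
      refine this.congr_deriv ?_
      ring
    have hint : IntervalIntegrable
        (fun t : ℝ => ((a:ℝ)+1) * (t^a * (1-t)^(b+1)) - ((b:ℝ)+1) * (t^(a+1) * (1-t)^b))
        MeasureTheory.volume 0 1 := by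
      apply Continuous.intervalIntegrable; fun_prop
    have hFTC := intervalIntegral.integral_eq_sub_of_hasDerivAt hder hint
    rw [intervalIntegral.integral_sub
        (by apply Continuous.intervalIntegrable; fun_prop)
        (by apply Continuous.intervalIntegrable; fun_prop),
      intervalIntegral.integral_const_mul, intervalIntegral.integral_const_mul,
      ih (a+1)] at hFTC
    have h0 : (1:ℝ)^(a+1) * (1-1)^(b+1) - ((0:ℝ)^(a+1) * (1-0)^(b+1)) = 0 := by
      norm_num
    rw [h0] at hFTC
    have key : ((a:ℝ)+1) * (∫ t in (0:ℝ)..1, t ^ a * (1 - t) ^ (b+1))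
        = ((b:ℝ)+1) * ((((a+1).factorial : ℝ)) * (b.factorial) / ((a+1+b+1).factorial)) := by
      linarith
    have ha1 : ((a:ℝ)+1) ≠ 0 := by positivity
    have heq : a + (b+1) + 1 = a + 1 + b + 1 := by omega
    rw [heq]
    have hfa : (((a+1).factorial : ℝ)) = ((a:ℝ)+1) * (a.factorial) := by
      rw [Nat.factorial_succ]; push_cast; ring
    have hfb : (((b+1).factorial : ℝ)) = ((b:ℝ)+1) * (b.factorial) := by
      rw [Nat.factorial_succ]; push_cast; ring
    field_simp at key ⊢
    rw [hfa] at key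
    nlinarith [key]

lemma bern_sum_one (N : ℕ) (x : ℝ) :
    ∑ m ∈ Finset.range (N+1), (N.choose m : ℝ) * x^m * (1-x)^(N-m) = 1 := by
  calc ∑ m ∈ Finset.range (N+1), (N.choose m : ℝ) * x^m * (1-x)^(N-m)
      = (x + (1-x))^N := by
        rw [add_pow]
        exact Finset.sum_congr rfl (fun m _ => by ring)
    _ = 1 := by norm_num

lemma desc_choose {N j m' : ℕ} (h : j + m' ≤ N) :
    (j+m').descFactorial j * N.choose (j+m') = N.descFactorial j * (N-j).choose m' := by
  have hc := Nat.choose_mul (n := N) (Nat.le_add_right j m')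
  rw [Nat.add_sub_cancel_left] at hc
  rw [Nat.descFactorial_eq_factorial_mul_choose, Nat.descFactorial_eq_factorial_mul_choose,
    mul_assoc, mul_assoc, mul_comm ((j+m').choose j), hc]

lemma bern_mom (N j : ℕ) (x : ℝ) :
    ∑ m ∈ Finset.range (N+1),
        (m.descFactorial j : ℝ) * ((N.choose m : ℝ) * x^m * (1-x)^(N-m))
      = (N.descFactorial j : ℝ) * x^j := by
  rcases le_or_gt j N with hj | hj
  · rw [show N + 1 = j + (N - j + 1) by omega, Finset.sum_range_add]
    have h1 : ∑ m ∈ Finset.range j,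
        (m.descFactorial j : ℝ) * ((N.choose m : ℝ) * x^m * (1-x)^(N-m)) = 0 := by
      apply Finset.sum_eq_zero
      intro m hm
      rw [Nat.descFactorial_eq_zero_iff_lt.2 (Finset.mem_range.1 hm)]
      simp
    rw [h1, zero_add]
    have h2 : ∀ m' ∈ Finset.range (N - j + 1),
        ((j+m').descFactorial j : ℝ) * ((N.choose (j+m') : ℝ) * x^(j+m') * (1-x)^(N-(j+m')))
        = (N.descFactorial j : ℝ) * x^j *
            (((N-j).choose m' : ℝ) * x^m' * (1-x)^((N-j)-m')) := by
      intro m' hm'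
      have hle : j + m' ≤ N := by
        have := Finset.mem_range.1 hm'; omega
      have hkey : ((j+m').descFactorial j : ℝ) * (N.choose (j+m') : ℝ)
          = (N.descFactorial j : ℝ) * ((N-j).choose m' : ℝ) := by
        exact_mod_cast desc_choose hle
      have hpow : x^(j+m') = x^j * x^m' := pow_add x j m'
      have hsub : N - (j + m') = (N - j) - m' := by omega
      rw [hsub, hpow]
      linear_combination x^j * x^m' * (1-x)^((N-j)-m') * hkey
    rw [Finset.sum_congr rfl h2, ← Finset.mul_sum, bern_sum_one (N-j) x, mul_one]
  · have hz : (N.descFactorial j : ℝ) = 0 := by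
      rw [Nat.descFactorial_eq_zero_iff_lt.2 hj] ; simp
    rw [hz, zero_mul]
    apply Finset.sum_eq_zero
    intro m hm
    have hlt : m < j := by have := Finset.mem_range.1 hm; omega
    rw [Nat.descFactorial_eq_zero_iff_lt.2 hlt]
    simp

lemma bern_nat (n k : ℕ) (hk : k ≤ n) (x : ℝ) :
    bern n (k : ℤ) x = (n.choose k : ℝ) * x^k * (1-x)^(n-k) := by
  rw [bern, if_pos ⟨Int.natCast_nonneg k, by exact_mod_cast hk⟩]
  simp

lemma bern_zero_of {n : ℕ} {j : ℤ} (x : ℝ) (h : j < 0 ∨ (n:ℤ) < j) : bern n j x = 0 := by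
  rw [bern, if_neg]
  rcases h with h | h
  · exact fun hc => absurd hc.1 (by omega)
  · exact fun hc => absurd hc.2 (by omega)

lemma fact_prod (k j : ℕ) :
    ((k+j).factorial : ℝ) = k.factorial * ∏ t ∈ Finset.range j, ((k:ℝ)+t+1) := by
  induction j with
  | zero => simp
  | succ j ih =>
    rw [Finset.prod_range_succ, ← mul_assoc, ← ih,
      show k+(j+1) = (k+j)+1 from rfl, Nat.factorial_succ]
    push_cast
    ring

/-- value of `(n+1) * choose * Beta` -/
lemma CB (n k j : ℕ) (hk : k ≤ n) :
    (n.choose k : ℝ) * ((k+j).factorial * (n-k).factorial / ((k+j) + (n-k) + 1).factorial)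
    = (∏ t ∈ Finset.range j, ((k:ℝ)+t+1)) / (∏ t ∈ Finset.range (j+1), ((n:ℝ)+t+1)) := by
  rw [show (k+j) + (n-k) + 1 = n + (j+1) by omega]
  rw [Nat.cast_choose ℝ hk, fact_prod k j, fact_prod n (j+1)]
  have h1 : (k.factorial : ℝ) ≠ 0 := by positivity
  have h2 : ((n-k).factorial : ℝ) ≠ 0 := by positivity
  have h3 : (n.factorial : ℝ) ≠ 0 := by positivity
  have h4 : (∏ t ∈ Finset.range (j+1), ((n:ℝ)+t+1)) ≠ 0 := by
    apply Finset.prod_ne_zero_iff.2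
    intro t _
    positivity
  field_simp

noncomputable def Vf (n : ℕ) (x : ℝ) (k : ℕ) : ℝ :=
  x^4 - 4*x^3 * (((k:ℝ)+1) / ((n:ℝ)+2))
  + 6*x^2 * ((((k:ℝ)+1)*((k:ℝ)+2)) / (((n:ℝ)+2)*((n:ℝ)+3)))
  - 4*x * ((((k:ℝ)+1)*((k:ℝ)+2)*((k:ℝ)+3)) / (((n:ℝ)+2)*((n:ℝ)+3)*((n:ℝ)+4)))
  + (((k:ℝ)+1)*((k:ℝ)+2)*((k:ℝ)+3)*((k:ℝ)+4)) / (((n:ℝ)+2)*((n:ℝ)+3)*((n:ℝ)+4)*((n:ℝ)+5))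

lemma bern_int (n k : ℕ) (hk : k ≤ n) (x : ℝ) :
    (∫ t in (0:ℝ)..1, bern n (k : ℤ) t * (t - x)^4) = Vf n x k / ((n:ℝ)+1) := by
  set C : ℝ := (n.choose k : ℝ) with hC
  have key : (fun t : ℝ => bern n (k : ℤ) t * (t - x)^4)
      = fun t : ℝ => x^4*C*(t^(k+0)*(1-t)^(n-k)) + (-(4*x^3*C))*(t^(k+1)*(1-t)^(n-k))
        + (6*x^2*C)*(t^(k+2)*(1-t)^(n-k)) + (-(4*x*C))*(t^(k+3)*(1-t)^(n-k))
        + C*(t^(k+4)*(1-t)^(n-k)) := by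
    funext t
    rw [bern_nat n k hk]
    ring
  rw [key]
  have hii : ∀ j : ℕ, IntervalIntegrable (fun t : ℝ => t^(k+j)*(1-t)^(n-k))
      MeasureTheory.volume 0 1 := by
    intro j
    apply Continuous.intervalIntegrable
    fun_prop
  have II : ∀ f : ℝ → ℝ, Continuous f → IntervalIntegrable f MeasureTheory.volume 0 1 :=
    fun f hf => hf.intervalIntegrable 0 1
  rw [intervalIntegral.integral_add (II _ (by fun_prop)) (II _ (by fun_prop)),
    intervalIntegral.integral_add (II _ (by fun_prop)) (II _ (by fun_prop)),
    intervalIntegral.integral_add (II _ (by fun_prop)) (II _ (by fun_prop)),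
    intervalIntegral.integral_add (II _ (by fun_prop)) (II _ (by fun_prop)),
    intervalIntegral.integral_const_mul, intervalIntegral.integral_const_mul,
    intervalIntegral.integral_const_mul, intervalIntegral.integral_const_mul,
    intervalIntegral.integral_const_mul,
    beta_nat (n-k) (k+0), beta_nat (n-k) (k+1), beta_nat (n-k) (k+2), beta_nat (n-k) (k+3),
    beta_nat (n-k) (k+4)]
  have e0 := CB n k 0 hk
  have e1 := CB n k 1 hk
  have e2 := CB n k 2 hk
  have e3 := CB n k 3 hk
  have e4 := CB n k 4 hk
  simp only [Finset.prod_range_succ, Finset.prod_range_zero, one_mul] at e0 e1 e2 e3 e4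
  set F0 : ℝ := ((k+0).factorial : ℝ) * ((n-k).factorial) / (((k+0) + (n-k) + 1).factorial) with hF0
  set F1 : ℝ := ((k+1).factorial : ℝ) * ((n-k).factorial) / (((k+1) + (n-k) + 1).factorial) with hF1
  set F2 : ℝ := ((k+2).factorial : ℝ) * ((n-k).factorial) / (((k+2) + (n-k) + 1).factorial) with hF2
  set F3 : ℝ := ((k+3).factorial : ℝ) * ((n-k).factorial) / (((k+3) + (n-k) + 1).factorial) with hF3
  set F4 : ℝ := ((k+4).factorial : ℝ) * ((n-k).factorial) / (((k+4) + (n-k) + 1).factorial) with hF4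
  have goal_eq : x ^ 4 * C * F0 + -(4 * x ^ 3 * C) * F1 + 6 * x ^ 2 * C * F2
        + -(4 * x * C) * F3 + C * F4
      = x^4*(C*F0) - 4*x^3*(C*F1) + 6*x^2*(C*F2) - 4*x*(C*F3) + C*F4 := by ring
  rw [goal_eq, e0, e1, e2, e3, e4, Vf]
  have hn1 : ((n:ℝ)+1) ≠ 0 := by positivity
  have hn2 : ((n:ℝ)+2) ≠ 0 := by positivity
  have hn3 : ((n:ℝ)+3) ≠ 0 := by positivity
  have hn4 : ((n:ℝ)+4) ≠ 0 := by positivity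
  have hn5 : ((n:ℝ)+5) ≠ 0 := by positivity
  push_cast
  field_simp
  ring

lemma shift_sum (n i : ℕ) (hn : 4 ≤ n) (hi : i ≤ 2) (x : ℝ) (g : ℕ → ℝ) :
    ∑ k ∈ Finset.range (n+1), bern (n-2) ((k:ℤ) - (i:ℤ)) x * g k
    = ∑ m ∈ Finset.range (n-1), ((n-2).choose m : ℝ) * x^m * (1-x)^(n-2-m) * g (m+i) := by
  rw [show n+1 = i + ((n-1) + (2-i)) by omega, Finset.sum_range_add, Finset.sum_range_add]
  have h0 : ∑ k ∈ Finset.range i, bern (n-2) ((k:ℤ) - (i:ℤ)) x * g k = 0 := by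
    apply Finset.sum_eq_zero
    intro k hk
    have hk' := Finset.mem_range.1 hk
    rw [bern_zero_of x (Or.inl (by omega))]
    ring
  have h2 : ∑ l ∈ Finset.range (2-i),
      bern (n-2) (((i + ((n-1) + l) : ℕ) : ℤ) - (i:ℤ)) x * g (i + ((n-1) + l)) = 0 := by
    apply Finset.sum_eq_zero
    intro l _
    rw [bern_zero_of x (Or.inr (by push_cast [Nat.cast_sub (by omega : 2 ≤ n)]; omega))]
    ring
  rw [h0, h2, zero_add, add_zero]
  apply Finset.sum_congr rfl
  intro m hm
  have hm' : m ≤ n - 2 := by have := Finset.mem_range.1 hm; omega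
  have hidx : ((i + m : ℕ) : ℤ) - (i:ℤ) = (m:ℤ) := by push_cast; ring
  rw [hidx, bern_nat (n-2) m hm' x, show i + m = m + i by omega]

set_option maxHeartbeats 2000000 in
lemma key_moment (n i : ℕ) (hn : 4 ≤ n) (x : ℝ) :
    ∑ m ∈ Finset.range (n-1),
        ((n-2).choose m : ℝ) * x^m * (1-x)^(n-2-m) * Vf n x (m+i)
    = (((1)*(n:ℝ)^4*x^4 + (14)*(n:ℝ)^3*x^4 + (-4)*(n:ℝ)^3*x^3*(i:ℝ) + (-4)*(n:ℝ)^3*x^3 + (71)*(n:ℝ)^2*x^4 + (-48)*(n:ℝ)^2*x^3*(i:ℝ) + (-48)*(n:ℝ)^2*x^3 + (6)*(n:ℝ)^2*x^2*(i:ℝ)^2 + (18)*(n:ℝ)^2*x^2*(i:ℝ) + (12)*(n:ℝ)^2*x^2 + (154)*(n:ℝ)*x^4 + (-188)*(n:ℝ)*x^3*(i:ℝ) + (-188)*(n:ℝ)*x^3 + (54)*(n:ℝ)*x^2*(i:ℝ)^2 + (162)*(n:ℝ)*x^2*(i:ℝ) + (108)*(n:ℝ)*x^2 + (-4)*(n:ℝ)*x*(i:ℝ)^3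 + (-24)*(n:ℝ)*x*(i:ℝ)^2 + (-44)*(n:ℝ)*x*(i:ℝ) + (-24)*(n:ℝ)*x + (120)*x^4 + (-240)*x^3*(i:ℝ) + (-240)*x^3 + (120)*x^2*(i:ℝ)^2 + (360)*x^2*(i:ℝ) + (240)*x^2 + (-20)*x*(i:ℝ)^3 + (-120)*x*(i:ℝ)^2 + (-220)*x*(i:ℝ) + (-120)*x + (1)*(i:ℝ)^4 + (10)*(i:ℝ)^3 + (35)*(i:ℝ)^2 + (50)*(i:ℝ) + (24)) * (1) * x^0 + ((-4)*(n:ℝ)^3*x^3 + (-48)*(n:ℝ)^2*x^3 + (12)*(n:ℝ)^2*x^2*(i:ℝ) + (24)*(n:ℝ)^2*x^2 + (-188)*(n:ℝ)*x^3 + (108)*(n:ℝ)*x^2*(i:ℝ) + (216)*(n:ℝ)*x^2 + (-12)*(n:ℝ)*x*(i:ℝ)^2 + (-60)*(n:ℝ)*x*(i:ℝ) + (-72)*(n:ℝ)*x + (-240)*x^3 + (240)*x^2*(i:ℝ) + (480)*x^2 + (-60)*x*(i:ℝ)^2 + (-300)*x*(i:ℝ) + (-360)*x + (4)*(i:ℝ)^3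 + (36)*(i:ℝ)^2 + (104)*(i:ℝ) + (96)) * (((n:ℝ)-2)) * x^1 + ((6)*(n:ℝ)^2*x^2 + (54)*(n:ℝ)*x^2 + (-12)*(n:ℝ)*x*(i:ℝ) + (-36)*(n:ℝ)*x + (120)*x^2 + (-60)*x*(i:ℝ) + (-180)*x + (6)*(i:ℝ)^2 + (42)*(i:ℝ) + (72)) * ((((n:ℝ)-2)*((n:ℝ)-3))) * x^2 + ((-4)*(n:ℝ)*x + (-20)*x + (4)*(i:ℝ) + (16)) * ((((n:ℝ)-2)*((n:ℝ)-3)*((n:ℝ)-4))) * x^3 + ((1)) * ((((n:ℝ)-2)*((n:ℝ)-3)*((n:ℝ)-4)*((n:ℝ)-5))) * x^4) / (((n:ℝ)+2)*((n:ℝ)+3)*((n:ℝ)+4)*((n:ℝ)+5)) := by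
  have hn2 : ((n:ℝ)+2) ≠ 0 := by positivity
  have hn3 : ((n:ℝ)+3) ≠ 0 := by positivity
  have hn4 : ((n:ℝ)+4) ≠ 0 := by positivity
  have hn5 : ((n:ℝ)+5) ≠ 0 := by positivity
  have hpt : ∀ m ∈ Finset.range (n-1),
      ((n-2).choose m : ℝ) * x^m * (1-x)^(n-2-m) * Vf n x (m+i)
      = (((1)*(n:ℝ)^4*x^4 + (14)*(n:ℝ)^3*x^4 + (-4)*(n:ℝ)^3*x^3*(i:ℝ) + (-4)*(n:ℝ)^3*x^3 + (71)*(n:ℝ)^2*x^4 + (-48)*(n:ℝ)^2*x^3*(i:ℝ) + (-48)*(n:ℝ)^2*x^3 + (6)*(n:ℝ)^2*x^2*(i:ℝ)^2 + (18)*(n:ℝ)^2*x^2*(i:ℝ) + (12)*(n:ℝ)^2*x^2 + (154)*(n:ℝ)*x^4 + (-188)*(n:ℝ)*x^3*(i:ℝ) + (-188)*(n:ℝ)*x^3 + (54)*(n:ℝ)*x^2*(i:ℝ)^2 + (162)*(n:ℝ)*x^2*(i:ℝ) + (108)*(n:ℝ)*x^2 + (-4)*(n:ℝ)*x*(i:ℝ)^3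 + (-24)*(n:ℝ)*x*(i:ℝ)^2 + (-44)*(n:ℝ)*x*(i:ℝ) + (-24)*(n:ℝ)*x + (120)*x^4 + (-240)*x^3*(i:ℝ) + (-240)*x^3 + (120)*x^2*(i:ℝ)^2 + (360)*x^2*(i:ℝ) + (240)*x^2 + (-20)*x*(i:ℝ)^3 + (-120)*x*(i:ℝ)^2 + (-220)*x*(i:ℝ) + (-120)*x + (1)*(i:ℝ)^4 + (10)*(i:ℝ)^3 + (35)*(i:ℝ)^2 + (50)*(i:ℝ) + (24)) / (((n:ℝ)+2)*((n:ℝ)+3)*((n:ℝ)+4)*((n:ℝ)+5))) *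
          ((m.descFactorial 0 : ℝ) * (((n-2).choose m : ℝ) * x^m * (1-x)^(n-2-m)))
        + (((-4)*(n:ℝ)^3*x^3 + (-48)*(n:ℝ)^2*x^3 + (12)*(n:ℝ)^2*x^2*(i:ℝ) + (24)*(n:ℝ)^2*x^2 + (-188)*(n:ℝ)*x^3 + (108)*(n:ℝ)*x^2*(i:ℝ) + (216)*(n:ℝ)*x^2 + (-12)*(n:ℝ)*x*(i:ℝ)^2 + (-60)*(n:ℝ)*x*(i:ℝ) + (-72)*(n:ℝ)*x + (-240)*x^3 + (240)*x^2*(i:ℝ) + (480)*x^2 + (-60)*x*(i:ℝ)^2 + (-300)*x*(i:ℝ) + (-360)*x + (4)*(i:ℝ)^3 + (36)*(i:ℝ)^2 + (104)*(i:ℝ) + (96)) / (((n:ℝ)+2)*((n:ℝ)+3)*((n:ℝ)+4)*((n:ℝ)+5))) *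
          ((m.descFactorial 1 : ℝ) * (((n-2).choose m : ℝ) * x^m * (1-x)^(n-2-m)))
        + (((6)*(n:ℝ)^2*x^2 + (54)*(n:ℝ)*x^2 + (-12)*(n:ℝ)*x*(i:ℝ) + (-36)*(n:ℝ)*x + (120)*x^2 + (-60)*x*(i:ℝ) + (-180)*x + (6)*(i:ℝ)^2 + (42)*(i:ℝ) + (72)) / (((n:ℝ)+2)*((n:ℝ)+3)*((n:ℝ)+4)*((n:ℝ)+5))) *
          ((m.descFactorial 2 : ℝ) * (((n-2).choose m : ℝ) * x^m * (1-x)^(n-2-m)))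
        + (((-4)*(n:ℝ)*x + (-20)*x + (4)*(i:ℝ) + (16)) / (((n:ℝ)+2)*((n:ℝ)+3)*((n:ℝ)+4)*((n:ℝ)+5))) *
          ((m.descFactorial 3 : ℝ) * (((n-2).choose m : ℝ) * x^m * (1-x)^(n-2-m)))
        + (((1)) / (((n:ℝ)+2)*((n:ℝ)+3)*((n:ℝ)+4)*((n:ℝ)+5))) *
          ((m.descFactorial 4 : ℝ) * (((n-2).choose m : ℝ) * x^m * (1-x)^(n-2-m))) := by
    intro m _
    rw [Nat.descFactorial_zero, df1, df2, df3, df4, Vf]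
    push_cast
    field_simp
    ring
  rw [Finset.sum_congr rfl hpt]
  rw [Finset.sum_add_distrib, Finset.sum_add_distrib, Finset.sum_add_distrib,
    Finset.sum_add_distrib, ← Finset.mul_sum, ← Finset.mul_sum, ← Finset.mul_sum,
    ← Finset.mul_sum, ← Finset.mul_sum]
  rw [show n - 1 = (n-2)+1 by omega]
  rw [bern_mom (n-2) 0 x, bern_mom (n-2) 1 x, bern_mom (n-2) 2 x, bern_mom (n-2) 3 x,
    bern_mom (n-2) 4 x]
  rw [Nat.descFactorial_zero, df1, df2, df3, df4]
  have hc : ((n-2 : ℕ) : ℝ) = (n:ℝ) - 2 := by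
    have : (2:ℕ) ≤ n := by omega
    push_cast [Nat.cast_sub this]
    ring
  rw [hc]
  field_simp
  ring

set_option maxHeartbeats 2000000 in
lemma DM2_closed (n : ℕ) (hn : 4 ≤ n) (x : ℝ) :
    DM2 n (fun t => (t - x)^4) x = ((-12)*(n:ℝ)^2*x^4 + 24*(n:ℝ)^2*x^3 - 12*(n:ℝ)^2*x^2 + 708*(n:ℝ)*x^4 - 1416*(n:ℝ)*x^3 + 864*(n:ℝ)*x^2 - 156*(n:ℝ)*x - 3888*x^4 + 7776*x^3 - 5460*x^2 + 1572*x - 144) / (((n:ℝ)+2)*((n:ℝ)+3)*((n:ℝ)+4)*((n:ℝ)+5)) := by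
  have hn1 : ((n:ℝ)+1) ≠ 0 := by positivity
  have hn2 : ((n:ℝ)+2) ≠ 0 := by positivity
  have hn3 : ((n:ℝ)+3) ≠ 0 := by positivity
  have hn4 : ((n:ℝ)+4) ≠ 0 := by positivity
  have hn5 : ((n:ℝ)+5) ≠ 0 := by positivity
  simp only [DM2]
  have hint : ∀ k ∈ Finset.range (n+1),
      pM2 n (k:ℤ) x * ∫ t in (0:ℝ)..1, bern n (k:ℤ) t * (t - x)^4
      = pM2 n (k:ℤ) x * (Vf n x k / ((n:ℝ)+1)) := by
    intro k hk
    rw [bern_int n k (by have := Finset.mem_range.1 hk; omega) x]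
  rw [Finset.sum_congr rfl hint]
  have hsum : ∑ k ∈ Finset.range (n+1), pM2 n (k:ℤ) x * (Vf n x k / ((n:ℝ)+1))
      = (∑ k ∈ Finset.range (n+1), pM2 n (k:ℤ) x * Vf n x k) / ((n:ℝ)+1) := by
    rw [Finset.sum_div]
    exact Finset.sum_congr rfl (fun k _ => by ring)
  rw [hsum, mul_div_cancel₀ _ hn1]
  have hexp : ∀ k ∈ Finset.range (n+1), pM2 n (k:ℤ) x * Vf n x k
      = (((n:ℝ)-2)*x^2 - (n:ℝ)*x + 3/2) * (bern (n-2) (k:ℤ) x * Vf n x k)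
        + (2*((n:ℝ)-2)*x*(1-x)) * (bern (n-2) ((k:ℤ) - 1) x * Vf n x k)
        + (((n:ℝ)-2)*x^2 - ((n:ℝ)-4)*x - 1/2) * (bern (n-2) ((k:ℤ) - 2) x * Vf n x k) := by
    intro k _
    rw [pM2]
    ring
  rw [Finset.sum_congr rfl hexp, Finset.sum_add_distrib, Finset.sum_add_distrib,
    ← Finset.mul_sum, ← Finset.mul_sum, ← Finset.mul_sum]
  have sh0 : ∑ k ∈ Finset.range (n+1), bern (n-2) (k:ℤ) x * Vf n x k
      = ∑ m ∈ Finset.range (n-1),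
          ((n-2).choose m : ℝ) * x^m * (1-x)^(n-2-m) * Vf n x (m+0) := by
    rw [← shift_sum n 0 hn (by omega) x (Vf n x)]
    exact Finset.sum_congr rfl (fun k _ => by norm_num)
  have sh1 : ∑ k ∈ Finset.range (n+1), bern (n-2) ((k:ℤ) - 1) x * Vf n x k
      = ∑ m ∈ Finset.range (n-1),
          ((n-2).choose m : ℝ) * x^m * (1-x)^(n-2-m) * Vf n x (m+1) := by
    rw [← shift_sum n 1 hn (by omega) x (Vf n x)]
    exact Finset.sum_congr rfl (fun k _ => by norm_num)
  have sh2 : ∑ k ∈ Finset.range (n+1), bern (n-2) ((k:ℤ) - 2) x * Vf n x k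
      = ∑ m ∈ Finset.range (n-1),
          ((n-2).choose m : ℝ) * x^m * (1-x)^(n-2-m) * Vf n x (m+2) := by
    rw [← shift_sum n 2 hn (by omega) x (Vf n x)]
    exact Finset.sum_congr rfl (fun k _ => by norm_num)
  rw [sh0, sh1, sh2, key_moment n 0 hn x, key_moment n 1 hn x, key_moment n 2 hn x]
  push_cast
  field_simp
  ring

theorem DM2_fourth_central_moment_asymptotics :
    ∃ C > (0:ℝ), ∀ n : ℕ, 4 ≤ n → ∀ x ∈ Set.Icc (0:ℝ) 1,
      |DM2 n (fun t => (t - x) ^ 4) x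
          + 12 * x ^ 2 * (1 - x) ^ 2 * (n : ℝ) ^ 2
            / (((n : ℝ) + 2) * ((n : ℝ) + 3) * ((n : ℝ) + 4) * ((n : ℝ) + 5))|
        ≤ C / (n : ℝ) ^ 3 := by
  refine ⟨7854, by norm_num, ?_⟩
  intro n hn x hx
  obtain ⟨hx0, hx1⟩ := hx
  have hnn : (4:ℝ) ≤ (n:ℝ) := by exact_mod_cast hn
  have hn0 : (0:ℝ) < (n:ℝ) := by linarith
  have hQpos : (0:ℝ) < ((n:ℝ)+2)*((n:ℝ)+3)*((n:ℝ)+4)*((n:ℝ)+5) := by positivity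
  rw [DM2_closed n hn x, ← add_div]
  set num : ℝ := (-12)*(n:ℝ)^2*x^4 + 24*(n:ℝ)^2*x^3 - 12*(n:ℝ)^2*x^2 + 708*(n:ℝ)*x^4
      - 1416*(n:ℝ)*x^3 + 864*(n:ℝ)*x^2 - 156*(n:ℝ)*x - 3888*x^4 + 7776*x^3 - 5460*x^2
      + 1572*x - 144 + 12 * x ^ 2 * (1 - x) ^ 2 * (n : ℝ) ^ 2 with hnumdef
  have hxx2 : x^2 ≤ 1 := pow_le_one₀ hx0 hx1
  have hxx3 : x^3 ≤ 1 := pow_le_one₀ hx0 hx1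
  have hxx4 : x^4 ≤ 1 := pow_le_one₀ hx0 hx1
  have p2 : (0:ℝ) ≤ x^2 := by positivity
  have p3 : (0:ℝ) ≤ x^3 := by positivity
  have p4 : (0:ℝ) ≤ x^4 := by positivity
  have e1a : (0:ℝ) ≤ (n:ℝ)*x := by positivity
  have e1b : (n:ℝ)*x ≤ (n:ℝ) := by nlinarith
  have e2a : (0:ℝ) ≤ (n:ℝ)*x^2 := by positivity
  have e2b : (n:ℝ)*x^2 ≤ (n:ℝ) := by nlinarith
  have e3a : (0:ℝ) ≤ (n:ℝ)*x^3 := by positivity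
  have e3b : (n:ℝ)*x^3 ≤ (n:ℝ) := by nlinarith
  have e4a : (0:ℝ) ≤ (n:ℝ)*x^4 := by positivity
  have e4b : (n:ℝ)*x^4 ≤ (n:ℝ) := by nlinarith
  have hnum_eq : num = 708*((n:ℝ)*x^4) - 1416*((n:ℝ)*x^3) + 864*((n:ℝ)*x^2) - 156*((n:ℝ)*x)
      - 3888*x^4 + 7776*x^3 - 5460*x^2 + 1572*x - 144 := by
    rw [hnumdef]; ring
  have hnum : |num| ≤ 7854 * (n:ℝ) := by
    rw [abs_le]
    constructor
    · rw [hnum_eq]; linarith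
    · rw [hnum_eq]; linarith
  have hQn : (n:ℝ)^4 ≤ ((n:ℝ)+2)*((n:ℝ)+3)*((n:ℝ)+4)*((n:ℝ)+5) := by
    have hdiff : ((n:ℝ)+2)*((n:ℝ)+3)*((n:ℝ)+4)*((n:ℝ)+5) - (n:ℝ)^4
        = 14*(n:ℝ)^3 + 71*(n:ℝ)^2 + 154*(n:ℝ) + 120 := by ring
    nlinarith [pow_pos hn0 3, pow_pos hn0 2]
  rw [abs_div, abs_of_pos hQpos]
  have step1 : |num| / (((n:ℝ)+2)*((n:ℝ)+3)*((n:ℝ)+4)*((n:ℝ)+5)) ≤ (7854*(n:ℝ)) / (n:ℝ)^4 := by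
    apply div_le_div₀ (by positivity) hnum (by positivity) hQn
  have step2 : (7854*(n:ℝ)) / (n:ℝ)^4 = 7854 / (n:ℝ)^3 := by
    have hne : (n:ℝ) ≠ 0 := ne_of_gt hn0
    field_simp
  linarith [step1, step2.le, step2.ge]
end
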